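/- Let p ∈ (⋀²ℝ⁴)* have coordinates (e, p¹₁, p¹₂, p²₁, p²₂, r) with r ≠ 0. Then the polynomial function M₂(ℝ) → ℝ, v ↦ p(z(v)), has exactly one critical point v*, and its critical value is p(z(v*)) = e − (p¹₁p²₂ − p¹₂p²₁)/r. -/

import Mathlib

open ExteriorAlgebra

set_option synthInstance.maxHeartbeats 1000000
set_option maxHeartbeats 1000000

/-- The wedge `v₁ ∧ ⋯ ∧ vₙ` of `n` vectors, as an element of the `n`-th exterior power. -/
noncomputable def wedge {Q : Type*} [AddCommGroup Q] [Module ℝ Q] (n : ℕ) (v : Fin n → Q) :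
    ⋀[ℝ]^n Q :=
  ⟨ExteriorAlgebra.ιMulti ℝ n v, ExteriorAlgebra.ιMulti_range ℝ n ⟨v, rfl⟩⟩

/-- The element of the dual of `⋀[ℝ]^n Q` induced by an alternating `n`-form on `Q`. -/
noncomputable def extDual {Q : Type*} [AddCommGroup Q] [Module ℝ Q] (n : ℕ)
    (φ : Q [⋀^Fin n]→ₗ[ℝ] ℝ) : Module.Dual ℝ (⋀[ℝ]^n Q) :=
  (ExteriorAlgebra.liftAlternating
      (Function.update (fun i => (0 : Q [⋀^Fin i]→ₗ[ℝ] ℝ)) n φ)).comp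
    (⋀[ℝ]^n Q).subtype

/-- The basis covector `dξᵃ ∧ dξᵇ ∈ (⋀²ℝ⁴)*`, sending `w₀ ∧ w₁` to
`w₀ᵃ w₁ᵇ − w₁ᵃ w₀ᵇ`.  With the labels `(ξ⁰,ξ¹,ξ²,ξ³) = (x¹,x²,y¹,y²)`, `dd 0 1 = dx¹∧dx²`,
`dd 2 1 = dy¹∧dx²`, `dd 3 1 = dy²∧dx²`, `dd 0 2 = dx¹∧dy¹`, `dd 0 3 = dx¹∧dy²`,
`dd 2 3 = dy¹∧dy²`. -/
noncomputable def dd (a b : Fin 4) : Module.Dual ℝ (⋀[ℝ]^2 (Fin 4 → ℝ)) :=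
  extDual 2 ((Matrix.detRowAlternating : (Fin 2 → ℝ) [⋀^Fin 2]→ₗ[ℝ] ℝ).compLinearMap
    (LinearMap.pi ![(LinearMap.proj a : (Fin 4 → ℝ) →ₗ[ℝ] ℝ), LinearMap.proj b]))

/-- The vectors `u₁ = ∂x¹ + v¹₁∂y¹ + v²₁∂y²`, `u₂ = ∂x² + v¹₂∂y¹ + v²₂∂y²` associated with a
`2×2` matrix `v` (where `v i μ = v^(i+1)_(μ+1)`). -/
noncomputable def ucol (v : Fin 2 → Fin 2 → ℝ) (μ : Fin 2) : Fin 4 → ℝ :=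
  (Pi.single (Fin.castLE (by norm_num) μ) 1 : Fin 4 → ℝ) + v 0 μ • (Pi.single 2 1 : Fin 4 → ℝ) + v 1 μ • (Pi.single 3 1 : Fin 4 → ℝ)

/-- The Plücker chart `z(v) = u₁ ∧ u₂ ∈ ⋀²ℝ⁴`. -/
noncomputable def zmap (v : Fin 2 → Fin 2 → ℝ) : ⋀[ℝ]^2 (Fin 4 → ℝ) :=
  wedge 2 (ucol v)

/-- The element of `(⋀²ℝ⁴)*` with coordinates `(e, p¹₁, p¹₂, p²₁, p²₂, r)`, namely
`e dx¹∧dx² + p¹₁ dy¹∧dx² + p¹₂ dy²∧dx² + p²₁ dx¹∧dy¹ + p²₂ dx¹∧dy² + r dy¹∧dy²`. -/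
noncomputable def pform (e p11 p12 p21 p22 r : ℝ) : Module.Dual ℝ (⋀[ℝ]^2 (Fin 4 → ℝ)) :=
  e • dd 0 1 + p11 • dd 2 1 + p12 • dd 3 1 + p21 • dd 0 2 + p22 • dd 0 3 + r • dd 2 3

theorem dd_wedge (a b : Fin 4) (u : Fin 2 → Fin 4 → ℝ) :
    dd a b (wedge 2 u) = u 0 a * u 1 b - u 1 a * u 0 b := by
  have h : dd a b (wedge 2 u) =
      (ExteriorAlgebra.liftAlternating
        (Function.update (fun i => (0 : (Fin 4 → ℝ) [⋀^Fin i]→ₗ[ℝ] ℝ)) 2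
          ((Matrix.detRowAlternating : (Fin 2 → ℝ) [⋀^Fin 2]→ₗ[ℝ] ℝ).compLinearMap
            (LinearMap.pi ![(LinearMap.proj a : (Fin 4 → ℝ) →ₗ[ℝ] ℝ), LinearMap.proj b]))))
        (ιMulti ℝ 2 u) := rfl
  rw [h, liftAlternating_apply_ιMulti, Function.update_self]
  change Matrix.det (Matrix.of fun i =>
    (LinearMap.pi ![(LinearMap.proj a : (Fin 4 → ℝ) →ₗ[ℝ] ℝ), LinearMap.proj b]) (u i)) = _
  rw [Matrix.det_fin_two]
  simp [LinearMap.pi_apply]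
  ring

theorem ucol_apply (v : Fin 2 → Fin 2 → ℝ) :
    (ucol v 0 0 = 1 ∧ ucol v 0 1 = 0 ∧ ucol v 0 2 = v 0 0 ∧ ucol v 0 3 = v 1 0) ∧
    (ucol v 1 0 = 0 ∧ ucol v 1 1 = 1 ∧ ucol v 1 2 = v 0 1 ∧ ucol v 1 3 = v 1 1) := by
  simp (config := { decide := true }) [ucol, Pi.single_apply]

theorem pform_zmap (e p11 p12 p21 p22 r : ℝ) (v : Fin 2 → Fin 2 → ℝ) :
    pform e p11 p12 p21 p22 r (zmap v) =
      e + p11 * v 0 0 + p12 * v 1 0 + p21 * v 0 1 + p22 * v 1 1 +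
        r * (v 0 0 * v 1 1 - v 0 1 * v 1 0) := by
  obtain ⟨⟨h1, h2, h3, h4⟩, h5, h6, h7, h8⟩ := ucol_apply v
  simp only [pform, zmap, LinearMap.add_apply, LinearMap.smul_apply, smul_eq_mul,
    dd_wedge, h1, h2, h3, h4, h5, h6, h7, h8]
  ring

/-- Coordinate projection as a continuous linear map. -/
noncomputable def prcoord (i j : Fin 2) : (Fin 2 → Fin 2 → ℝ) →L[ℝ] ℝ :=
  (ContinuousLinearMap.proj (R := ℝ) (φ := fun _ : Fin 2 => ℝ) j).comp
    (ContinuousLinearMap.proj (R := ℝ) (φ := fun _ : Fin 2 => Fin 2 → ℝ) i)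

theorem prcoord_apply (i j : Fin 2) (w : Fin 2 → Fin 2 → ℝ) : prcoord i j w = w i j := rfl

theorem hasFDeriv_poly (e p11 p12 p21 p22 r : ℝ) (v : Fin 2 → Fin 2 → ℝ) :
    HasFDerivAt (fun v : Fin 2 → Fin 2 → ℝ => pform e p11 p12 p21 p22 r (zmap v))
      ((p11 + r * v 1 1) • prcoord 0 0 + (p12 - r * v 0 1) • prcoord 1 0 +
        (p21 - r * v 1 0) • prcoord 0 1 + (p22 + r * v 0 0) • prcoord 1 1) v := by
  have hfun : (fun v : Fin 2 → Fin 2 → ℝ => pform e p11 p12 p21 p22 r (zmap v)) =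
      fun v : Fin 2 → Fin 2 → ℝ => e + (p11 * v 0 0 + p12 * v 1 0 + p21 * v 0 1 + p22 * v 1 1 +
        r * (v 0 0 * v 1 1 - v 0 1 * v 1 0)) := by
    funext v
    rw [pform_zmap]; ring
  rw [hfun]
  have hp : ∀ i j : Fin 2, HasFDerivAt (fun v : Fin 2 → Fin 2 → ℝ => v i j) (prcoord i j) v :=
    fun i j => (prcoord i j).hasFDerivAt
  have H := ((((hp 0 0).const_mul p11).add ((hp 1 0).const_mul p12)).add
      ((hp 0 1).const_mul p21)).add ((hp 1 1).const_mul p22)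
  have H2 := (((hp 0 0).mul (hp 1 1)).sub ((hp 0 1).mul (hp 1 0))).const_mul r
  have h3 := (H.add H2).const_add e
  refine h3.congr_fderiv ?_
  ext w
  simp [prcoord_apply]
  ring

theorem fderiv_zero_iff (e p11 p12 p21 p22 r : ℝ) (v : Fin 2 → Fin 2 → ℝ) :
    fderiv ℝ (fun v : Fin 2 → Fin 2 → ℝ => pform e p11 p12 p21 p22 r (zmap v)) v = 0 ↔
      (p11 + r * v 1 1 = 0 ∧ p12 - r * v 0 1 = 0 ∧ p21 - r * v 1 0 = 0 ∧
        p22 + r * v 0 0 = 0) := by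
  rw [(hasFDeriv_poly e p11 p12 p21 p22 r v).fderiv]
  constructor
  · intro h
    have key : ∀ i j : Fin 2,
        ((p11 + r * v 1 1) • prcoord 0 0 + (p12 - r * v 0 1) • prcoord 1 0 +
          (p21 - r * v 1 0) • prcoord 0 1 + (p22 + r * v 0 0) • prcoord 1 1)
          (Pi.single i (Pi.single j 1)) = 0 := by
      intro i j; rw [h]; rfl
    have k1 := key 0 0
    have k2 := key 1 0
    have k3 := key 0 1
    have k4 := key 1 1
    simp (config := { decide := true }) [prcoord_apply, Pi.single_apply] at k1 k2 k3 k4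
    exact ⟨k1, by linarith [k2], by linarith [k3], k4⟩
  · rintro ⟨h1, h2, h3, h4⟩
    rw [h1, h2, h3, h4]
    simp

/-- Example 4 of the paper, trivial Lagrangian `l = 0`: for `r ≠ 0` the map
`v ↦ p(z(v))` has exactly one critical point, with critical value
`e − (p¹₁p²₂ − p¹₂p²₁)/r`. -/
theorem statement15 (e p11 p12 p21 p22 r : ℝ) (hr : r ≠ 0) :
    (∃! v : Fin 2 → Fin 2 → ℝ,
        fderiv ℝ (fun v : Fin 2 → Fin 2 → ℝ => pform e p11 p12 p21 p22 r (zmap v)) v = 0) ∧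
      ∀ v : Fin 2 → Fin 2 → ℝ,
        fderiv ℝ (fun v : Fin 2 → Fin 2 → ℝ => pform e p11 p12 p21 p22 r (zmap v)) v = 0 →
          pform e p11 p12 p21 p22 r (zmap v) = e - (p11 * p22 - p12 * p21) / r := by
  constructor
  · refine ⟨![![-p22 / r, p12 / r], ![p21 / r, -p11 / r]], ?_, ?_⟩
    · show fderiv ℝ (fun v : Fin 2 → Fin 2 → ℝ => pform e p11 p12 p21 p22 r (zmap v))
          ![![-p22 / r, p12 / r], ![p21 / r, -p11 / r]] = 0
      rw [fderiv_zero_iff]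
      refine ⟨?_, ?_, ?_, ?_⟩ <;> simp <;> field_simp <;> ring
    · intro w hw
      rw [fderiv_zero_iff] at hw
      obtain ⟨h1, h2, h3, h4⟩ := hw
      funext i j
      fin_cases i <;> fin_cases j <;> simp <;> field_simp <;> linarith
  · intro v hv
    rw [fderiv_zero_iff] at hv
    obtain ⟨h1, h2, h3, h4⟩ := hv
    have e1 : v 1 1 = -p11 / r := by field_simp; linarith
    have e2 : v 0 1 = p12 / r := by field_simp; linarith
    have e3 : v 1 0 = p21 / r := by field_simp; linarith
    have e4 : v 0 0 = -p22 / r := by field_simp; linarith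
    rw [pform_zmap, e1, e2, e3, e4]
    field_simp
    ring
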